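/- Let A be a rational m×n matrix. Then there exists a nonnegative rational q×m matrix U, depending only on A, such that for every b ∈ ℝᵐ, the polyhedron P = {x ∈ ℝⁿ : Ax ≥ b} satisfies P = {x ∈ ℝⁿ : (UA)x ≥ Ub} and the system (UA)x ≥ Ub is totally dual integral. -/

import Mathlib

open Finset RealInnerProductSpace

section ConeAux

variable {ι : Type*} [Fintype ι] [DecidableEq ι] {n : ℕ}

/-- conic Carathéodory -/
lemma carat' {E : Type*} [AddCommGroup E] [Module ℝ E] (v : ι → E) (s : Finset ι) (x : E)
    (hx : ∃ y : ι → ℝ, (∀ i, 0 ≤ y i) ∧ x = ∑ i ∈ s, y i • v i) :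
    ∃ t ⊆ s, LinearIndependent ℝ (fun i : ↥t => v i) ∧
      ∃ z : ι → ℝ, (∀ i, 0 ≤ z i) ∧ x = ∑ i ∈ t, z i • v i := by
  classical
  induction s using Finset.strongInduction with
  | _ s ih =>
    obtain ⟨y, hy, hxy⟩ := hx
    by_cases hli : LinearIndependent ℝ (fun i : ↥s => v i)
    · exact ⟨s, le_refl _, hli, y, hy, hxy⟩
    · rw [Fintype.linearIndependent_iff] at hli
      push_neg at hli
      obtain ⟨g, hg0, i₀, hgi₀⟩ := hli
      set G0 : ι → ℝ := fun i => if h : i ∈ s then g ⟨i, h⟩ else 0 with hG0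
      set G : ι → ℝ := if 0 < G0 i₀ then G0 else -G0 with hG
      have hGsum : ∑ i ∈ s, G i • v i = 0 := by
        have h1 : ∑ i ∈ s, G0 i • v i = 0 := by
          rw [← Finset.sum_attach s (fun i => G0 i • v i)]
          have : ∀ i : ↥s, G0 i • v i = g i • v i := by
            intro i; simp [hG0, i.2]
          rw [Finset.sum_congr rfl (fun i _ => this i)]
          exact hg0
        by_cases h : 0 < G0 i₀
        · simpa [hG, h] using h1
        · simp only [hG, h, if_false]
          rw [← neg_eq_zero] at h1
          rw [← h1, ← Finset.sum_neg_distrib]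
          exact Finset.sum_congr rfl (fun i _ => by simp)
      have hGpos : ∃ i ∈ s, 0 < G i := by
        have hne : G0 i₀ ≠ 0 := by simpa [hG0, i₀.2] using hgi₀
        rcases lt_or_gt_of_ne hne with h | h
        · exact ⟨i₀, i₀.2, by simp [hG, not_lt.mpr h.le, lt_of_lt_of_le h (le_refl _), neg_pos, h]⟩
        · exact ⟨i₀, i₀.2, by simp [hG, h]⟩
      obtain ⟨ip, hips, hipp⟩ := hGpos
      set P := s.filter (fun i => 0 < G i) with hP
      have hPne : P.Nonempty := ⟨ip, by simp [hP, hips, hipp]⟩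
      obtain ⟨i₁, hi₁P, hi₁min⟩ := Finset.exists_min_image P (fun i => y i / G i) hPne
      have hi₁s : i₁ ∈ s := (Finset.mem_filter.mp hi₁P).1
      have hGi₁ : 0 < G i₁ := (Finset.mem_filter.mp hi₁P).2
      set lam := y i₁ / G i₁ with hlam
      have hlam0 : 0 ≤ lam := div_nonneg (hy i₁) hGi₁.le
      set z : ι → ℝ := fun i => if i ∈ s then y i - lam * G i else 0 with hz
      have hz0 : ∀ i, 0 ≤ z i := by
        intro i
        by_cases hi : i ∈ s
        · simp only [hz, hi, if_true, sub_nonneg]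
          by_cases hGi : 0 < G i
          · have := hi₁min i (Finset.mem_filter.mpr ⟨hi, hGi⟩)
            calc lam * G i ≤ (y i / G i) * G i := by
                  exact mul_le_mul_of_nonneg_right this hGi.le
              _ = y i := div_mul_cancel₀ _ hGi.ne'
          · have : G i ≤ 0 := not_lt.mp hGi
            nlinarith [hy i]
        · simp [hz, hi]
      have hzi₁ : z i₁ = 0 := by
        simp only [hz, hi₁s, if_true, hlam]
        field_simp
        ring
      have hxz : x = ∑ i ∈ s, z i • v i := by
        have : ∑ i ∈ s, z i • v i = ∑ i ∈ s, (y i • v i - lam • (G i • v i)) := by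
          refine Finset.sum_congr rfl (fun i hi => ?_)
          simp [hz, hi, sub_smul, smul_smul]
        rw [this, Finset.sum_sub_distrib, ← Finset.smul_sum, hGsum, smul_zero, sub_zero, hxy]
      have hxz' : x = ∑ i ∈ s.erase i₁, z i • v i := by
        rw [hxz, ← Finset.add_sum_erase s _ hi₁s, hzi₁, zero_smul, zero_add]
      obtain ⟨t, hts, hli, w, hw⟩ := ih (s.erase i₁) (Finset.erase_ssubset hi₁s) ⟨z, hz0, hxz'⟩
      exact ⟨t, hts.trans (Finset.erase_subset _ _), hli, w, hw⟩

lemma piece_closed (v : ι → EuclideanSpace ℝ (Fin n)) (t : Finset ι)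
    (hli : LinearIndependent ℝ (fun i : ↥t => v i)) :
    IsClosed {x : EuclideanSpace ℝ (Fin n) |
      ∃ z : ι → ℝ, (∀ i, 0 ≤ z i) ∧ x = ∑ i ∈ t, z i • v i} := by
  classical
  set f : (↥t → ℝ) →ₗ[ℝ] EuclideanSpace ℝ (Fin n) :=
    { toFun := fun y => ∑ i : ↥t, y i • v i
      map_add' := by intro a b; simp [add_smul, Finset.sum_add_distrib]
      map_smul' := by intro c a; simp [smul_smul, Finset.smul_sum] } with hf
  have hker : LinearMap.ker f = ⊥ := by
    rw [LinearMap.ker_eq_bot']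
    intro y hy
    have := Fintype.linearIndependent_iff.mp hli y hy
    funext i; exact this i
  have hemb : Topology.IsClosedEmbedding f := LinearMap.isClosedEmbedding_of_injective hker
  have horth : IsClosed {y : ↥t → ℝ | ∀ i, 0 ≤ y i} := by
    have : {y : ↥t → ℝ | ∀ i, 0 ≤ y i} = ⋂ i, {y : ↥t → ℝ | 0 ≤ y i} := by
      ext y; simp
    rw [this]
    exact isClosed_iInter (fun i => isClosed_le continuous_const (continuous_apply i))
  have himg : {x : EuclideanSpace ℝ (Fin n) | ∃ z : ι → ℝ, (∀ i, 0 ≤ z i) ∧ x = ∑ i ∈ t, z i • v i}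
      = f '' {y : ↥t → ℝ | ∀ i, 0 ≤ y i} := by
    ext x
    constructor
    · rintro ⟨z, hz, rfl⟩
      refine ⟨fun i => z i, fun i => hz i, ?_⟩
      simp only [hf, LinearMap.coe_mk, AddHom.coe_mk]
      exact (Finset.sum_attach t (fun i => z i • v i)).symm ▸ rfl
    · rintro ⟨y, hy, rfl⟩
      refine ⟨fun i => if h : i ∈ t then y ⟨i, h⟩ else 0,
        fun i => by dsimp; split <;> [exact hy _; rfl], ?_⟩
      simp only [hf, LinearMap.coe_mk, AddHom.coe_mk]
      rw [← Finset.sum_attach t (fun i => (if h : i ∈ t then y ⟨i, h⟩ else 0) • v i)]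
      exact Finset.sum_congr rfl (fun i _ => by simp [i.2])
  rw [himg]
  exact hemb.isClosedMap _ horth

lemma cone_union (v : ι → EuclideanSpace ℝ (Fin n)) (s : Finset ι) :
    {x : EuclideanSpace ℝ (Fin n) | ∃ y : ι → ℝ, (∀ i, 0 ≤ y i) ∧ x = ∑ i ∈ s, y i • v i}
      = ⋃ t ∈ {t : Finset ι | t ⊆ s ∧ LinearIndependent ℝ (fun i : ↥t => v i)},
        {x : EuclideanSpace ℝ (Fin n) | ∃ z : ι → ℝ, (∀ i, 0 ≤ z i) ∧ x = ∑ i ∈ t, z i • v i} := by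
  classical
  ext x
  simp only [Set.mem_iUnion, Set.mem_setOf_eq]
  constructor
  · intro hx
    obtain ⟨t, hts, hli, z, hz, hxz⟩ := carat' v s x hx
    exact ⟨t, ⟨hts, hli⟩, z, hz, hxz⟩
  · rintro ⟨t, ⟨hts, _⟩, z, hz, hxz⟩
    refine ⟨fun i => if i ∈ t then z i else 0,
      fun i => by dsimp; split <;> [exact hz i; rfl], ?_⟩
    rw [hxz]
    rw [← Finset.sum_subset hts (fun i _ hit => by simp [hit])]
    exact Finset.sum_congr rfl (fun i hit => by simp [hit])

lemma cone_closed (v : ι → EuclideanSpace ℝ (Fin n)) (s : Finset ι) :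
    IsClosed {x : EuclideanSpace ℝ (Fin n) |
      ∃ y : ι → ℝ, (∀ i, 0 ≤ y i) ∧ x = ∑ i ∈ s, y i • v i} := by
  rw [cone_union v s]
  exact Set.Finite.isClosed_biUnion (Set.toFinite _) (fun t ht => piece_closed v t ht.2)

lemma farkas_sep (v : ι → EuclideanSpace ℝ (Fin n)) (s : Finset ι)
    (c : EuclideanSpace ℝ (Fin n))
    (hc : ∀ d : EuclideanSpace ℝ (Fin n), (∀ i ∈ s, 0 ≤ ⟪v i, d⟫) → 0 ≤ ⟪d, c⟫) :
    ∃ y : ι → ℝ, (∀ i, 0 ≤ y i) ∧ c = ∑ i ∈ s, y i • v i := by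
  classical
  set C : Set (EuclideanSpace ℝ (Fin n)) :=
    {x | ∃ y : ι → ℝ, (∀ i, 0 ≤ y i) ∧ x = ∑ i ∈ s, y i • v i} with hC
  by_contra hcc
  have hcnot : c ∉ C := fun h => hcc h
  set K : ConvexCone ℝ (EuclideanSpace ℝ (Fin n)) :=
    { carrier := C
      smul_mem' := by
        rintro r hr x ⟨y, hy, rfl⟩
        exact ⟨fun i => r * y i, fun i => mul_nonneg hr.le (hy i), by
          rw [Finset.smul_sum]
          exact Finset.sum_congr rfl fun i _ => by dsimp; rw [smul_smul]⟩
      add_mem' := by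
        rintro x ⟨y, hy, rfl⟩ x' ⟨y', hy', rfl⟩
        exact ⟨fun i => y i + y' i, fun i => add_nonneg (hy i) (hy' i), by
          rw [← Finset.sum_add_distrib]
          exact Finset.sum_congr rfl fun i _ => (add_smul _ _ _).symm⟩ } with hK
  have hne : (K : Set (EuclideanSpace ℝ (Fin n))).Nonempty :=
    ⟨0, ⟨fun _ => 0, fun _ => le_refl _, by simp⟩⟩
  have hpt : (0 : EuclideanSpace ℝ (Fin n)) ∈ C := ⟨fun _ => 0, fun _ => le_refl _, by simp⟩
  obtain ⟨d, hd1, hd2⟩ :=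
    ProperCone.hyperplane_separation' ({ toSubmodule := K.toPointedCone hpt, isClosed' := cone_closed v s } : ProperCone ℝ (EuclideanSpace ℝ (Fin n))) (x₀ := c) hcnot
  have : 0 ≤ ⟪d, c⟫ := by
    refine hc d (fun i hi => ?_)
    refine hd1 (v i) ⟨fun i' => if i' = i then 1 else 0,
      fun i' => by dsimp; split <;> norm_num, ?_⟩
    show v i = ∑ i' ∈ s, (if i' = i then (1:ℝ) else 0) • v i'
    rw [Finset.sum_eq_single i (fun b _ hb => by simp [hb]) (fun h => absurd hi h)]
    simp
  linarith [real_inner_comm c d]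

lemma esum_apply {k : ℕ} (s : Finset ι) (f : ι → EuclideanSpace ℝ (Fin k)) (j : Fin k) :
    (∑ i ∈ s, f i) j = ∑ i ∈ s, f i j := by
  classical
  induction s using Finset.cons_induction with
  | empty => rfl
  | cons i s hi ih => rw [Finset.sum_cons, Finset.sum_cons, ← ih]; rfl

lemma real_inner_euclid {k : ℕ} (x y : EuclideanSpace ℝ (Fin k)) :
    ⟪x, y⟫ = ∑ j, x j * y j := by
  simp [PiLp.inner_apply, RCLike.inner_apply, starRingEnd_apply]
  exact Finset.sum_congr rfl (fun _ _ => mul_comm _ _)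

end ConeAux

section RatAux

lemma den_cast_mul_self (q : ℚ) : (q.den:ℚ) * q = q.num := by
  have hd : (q.den:ℚ) ≠ 0 := by exact_mod_cast q.den_nz
  have h := Rat.num_div_den q
  rw [div_eq_iff hd] at h
  linear_combination -h

lemma int_of_den_dvd (D : ℕ) (q : ℚ) (h : q.den ∣ D) : ∃ z : ℤ, (z : ℚ) = (D : ℚ) * q := by
  obtain ⟨k, hk⟩ := h
  refine ⟨q.num * k, ?_⟩
  rw [hk]
  push_cast
  linear_combination (-(k:ℚ)) * den_cast_mul_self q

lemma exists_leftinv {m n : ℕ} (A : Matrix (Fin m) (Fin n) ℚ) (t : Finset (Fin m)) :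
    ∃ M : Matrix (Fin m) (Fin n) ℚ,
      LinearIndependent ℚ (fun i : ↥t => (fun j => A i j : Fin n → ℚ)) →
        ∀ i ∈ t, ∀ i' ∈ t, ∑ j, M i j * A i' j = if i' = i then 1 else 0 := by
  classical
  by_cases h : LinearIndependent ℚ (fun i : ↥t => (fun j => A i j : Fin n → ℚ))
  · set φ : (↥t → ℚ) →ₗ[ℚ] (Fin n → ℚ) :=
      { toFun := fun y => ∑ i : ↥t, y i • (fun j => A i j)
        map_add' := by intro a b; simp [add_smul, Finset.sum_add_distrib]
        map_smul' := by intro c a; simp [smul_smul, Finset.smul_sum] } with hφ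
    have hker : LinearMap.ker φ = ⊥ := by
      rw [LinearMap.ker_eq_bot']
      intro y hy
      have := Fintype.linearIndependent_iff.mp h y hy
      funext i; exact this i
    obtain ⟨g, hg⟩ := φ.exists_leftInverse_of_injective hker
    refine ⟨fun i j => if hi : i ∈ t then g (Pi.single j 1) ⟨i, hi⟩ else 0, fun _ i hi i' hi' => ?_⟩
    have key : ∀ w : Fin n → ℚ, ∑ j, w j * g (Pi.single j 1) ⟨i, hi⟩ = g w ⟨i, hi⟩ := by
      intro w
      have : g w = ∑ j, w j • g (Pi.single j 1) := by
        conv_lhs => rw [← Finset.univ_sum_single w]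
        rw [map_sum]
        refine Finset.sum_congr rfl (fun j _ => ?_)
        have hsingle : Pi.single j (w j) = w j • (Pi.single j (1:ℚ) : Fin n → ℚ) := by
          funext j'
          rcases eq_or_ne j' j with rfl | hne
          · simp
          · simp [Pi.single_eq_of_ne hne]
        rw [hsingle, map_smul]
      rw [this]
      simp [Finset.sum_apply, smul_eq_mul, mul_comm]
    have hrow : (fun j => A i' j) = φ (Pi.single ⟨i', hi'⟩ 1) := by
      simp only [hφ, LinearMap.coe_mk, AddHom.coe_mk]
      show (fun j => A i' j) = ∑ i : ↥t, (Pi.single (⟨i', hi'⟩ : ↥t) (1:ℚ) : ↥t → ℚ) i • (fun j => A i j)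
      rw [Finset.sum_eq_single (⟨i', hi'⟩ : ↥t) (fun b _ hb => by
        rw [Pi.single_eq_of_ne hb, zero_smul]) (fun hmem => absurd (Finset.mem_univ _) hmem)]
      simp
    have : ∑ j, A i' j * g (Pi.single j 1) ⟨i, hi⟩ = g (fun j => A i' j) ⟨i, hi⟩ := key _
    rw [hrow] at this
    have hgφ : g (φ (Pi.single ⟨i', hi'⟩ 1)) = Pi.single ⟨i', hi'⟩ 1 := by
      rw [← LinearMap.comp_apply, hg, LinearMap.id_apply]
    rw [hgφ] at this
    have hfinal : ∑ j, A i' j * g (Pi.single j 1) ⟨i, hi⟩ = if i' = i then 1 else 0 := by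
      rw [this]
      by_cases hii : i' = i
      · subst hii; simp
      · rw [Pi.single_eq_of_ne (fun hh => hii (Subtype.ext_iff.mp hh).symm) 1]; simp [hii]
    rw [← hfinal]
    refine Finset.sum_congr rfl (fun j _ => ?_)
    beta_reduce
    rw [dif_pos hi, mul_comm]
  · exact ⟨0, fun hli => absurd hli h⟩

end RatAux

/-- Total dual integrality of a rational system Mx ≥ b (b possibly nonrational):
whenever the minimum of cᵀx over {x : Mx ≥ b} is attained (finite) for an integral c,
there is an integral dual-feasible y with yᵀM = c whose objective yᵀb equals the minimum. -/
def TDIQ {m n : ℕ} (M : Matrix (Fin m) (Fin n) ℚ) (b : Fin m → ℝ) : Prop :=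
  ∀ (c : Fin n → ℤ) (v : ℝ),
    IsLeast {w : ℝ | ∃ x : Fin n → ℝ,
        (∀ i, b i ≤ ∑ j, (M i j : ℝ) * x j) ∧ w = ∑ j, (c j : ℝ) * x j} v →
    ∃ y : Fin m → ℤ, (∀ i, 0 ≤ y i) ∧
      (∀ j, ∑ i, (y i : ℚ) * M i j = (c j : ℚ)) ∧ (∑ i, (y i : ℝ) * b i) = v

/-- for every rational A there is a nonnegative rational matrix U,
depending only on A, such that for every real b, {x : Ax ≥ b} = {x : (UA)x ≥ Ub}
and the system (UA)x ≥ Ub is totally dual integral. -/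
theorem stmt6 {m n : ℕ} (A : Matrix (Fin m) (Fin n) ℚ) :
    ∃ (q : ℕ) (U : Matrix (Fin q) (Fin m) ℚ), (∀ k i, 0 ≤ U k i) ∧
      ∀ b : Fin m → ℝ,
        ({x : Fin n → ℝ | ∀ i, b i ≤ ∑ j, (A i j : ℝ) * x j} =
          {x : Fin n → ℝ | ∀ k, (∑ i, (U k i : ℝ) * b i) ≤ ∑ j, ((U * A) k j : ℝ) * x j}) ∧
        TDIQ (U * A) (fun k => ∑ i, (U k i : ℝ) * b i) := by
  classical
  choose Mc hMc using fun t => exists_leftinv A t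
  set D : ℕ := ∏ t : Finset (Fin m), ∏ i, ∏ j, (Mc t i j).den with hD
  have hDpos : 0 < D :=
    Finset.prod_pos fun t _ => Finset.prod_pos fun i _ => Finset.prod_pos fun j _ => (Mc t i j).pos
  have hDden : ∀ t i j, (Mc t i j).den ∣ D := by
    intro t i j
    refine dvd_trans ?_ (Finset.dvd_prod_of_mem _ (Finset.mem_univ t))
    refine dvd_trans ?_ (Finset.dvd_prod_of_mem _ (Finset.mem_univ i))
    exact Finset.dvd_prod_of_mem _ (Finset.mem_univ j)
  have hDQ : ((D:ℚ)) ≠ 0 := by exact_mod_cast hDpos.ne'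
  have hDR : ((D:ℝ)) ≠ 0 := by exact_mod_cast hDpos.ne'
  set U : Matrix (Fin m) (Fin m) ℚ := (D:ℚ)⁻¹ • (1 : Matrix (Fin m) (Fin m) ℚ) with hU
  have hUent : ∀ k i, U k i = (D:ℚ)⁻¹ * (if k = i then 1 else 0) := by
    intro k i
    simp [hU, Matrix.smul_apply, Matrix.one_apply]
  have hUA : ∀ k j, (U * A) k j = (D:ℚ)⁻¹ * A k j := by
    intro k j
    rw [hU, Matrix.smul_mul, Matrix.one_mul, Matrix.smul_apply, smul_eq_mul]
  have hUb : ∀ b : Fin m → ℝ, ∀ k, (∑ i, (U k i : ℝ) * b i) = (D:ℝ)⁻¹ * b k := by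
    intro b k
    have : ∀ i, (U k i : ℝ) * b i = (if i = k then ((D:ℝ)⁻¹ * b i) else 0) := by
      intro i
      rw [hUent k i]
      rcases eq_or_ne i k with rfl | hne
      · push_cast; simp
      · simp [hne, Ne.symm hne]
    rw [Finset.sum_congr rfl (fun i _ => this i), Finset.sum_ite_eq' univ k _]
    simp
  refine ⟨m, U, ?_, ?_⟩
  · intro k i
    rw [hUent k i]
    have : (0:ℚ) ≤ (D:ℚ)⁻¹ := by positivity
    split <;> simp [this]
  intro b
  -- the feasibility equivalence
  have hfeq : ∀ x : Fin n → ℝ,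
      (∀ k, (∑ i, (U k i : ℝ) * b i) ≤ ∑ j, ((U * A) k j : ℝ) * x j) ↔
      (∀ i, b i ≤ ∑ j, (A i j : ℝ) * x j) := by
    intro x
    have hrow : ∀ k, (∑ j, ((U * A) k j : ℝ) * x j) = (D:ℝ)⁻¹ * ∑ j, (A k j : ℝ) * x j := by
      intro k
      rw [Finset.mul_sum]
      refine Finset.sum_congr rfl (fun j _ => ?_)
      rw [hUA k j]; push_cast; ring
    have hDRpos : (0:ℝ) < (D:ℝ)⁻¹ := by positivity
    constructor
    · intro h i
      have := h i
      rw [hrow i, hUb b i] at this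
      exact le_of_mul_le_mul_left this hDRpos
    · intro h k
      rw [hrow k, hUb b k]
      exact mul_le_mul_of_nonneg_left (h k) hDRpos.le
  constructor
  · ext x
    simp only [Set.mem_setOf_eq]
    exact (hfeq x).symm
  -- TDI
  intro c v hleast
  obtain ⟨⟨x0, hx0f, hx0v⟩, hlb⟩ := hleast
  have hx0A : ∀ i, b i ≤ ∑ j, (A i j : ℝ) * x0 j := (hfeq x0).mp hx0f
  set rA : Fin m → EuclideanSpace ℝ (Fin n) := fun i => WithLp.toLp 2 (fun j => (A i j : ℝ)) with hrA
  set cE : EuclideanSpace ℝ (Fin n) := WithLp.toLp 2 (fun j => ((c j : ℚ) : ℝ)) with hcE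
  set S : Finset (Fin m) := univ.filter (fun i => ∑ j, (A i j : ℝ) * x0 j = b i) with hS
  have htight : ∀ i ∈ S, ∑ j, (A i j : ℝ) * x0 j = b i := fun i hi => (Finset.mem_filter.mp hi).2
  have hslack : ∀ i, i ∉ S → b i < ∑ j, (A i j : ℝ) * x0 j := by
    intro i hi
    rcases lt_or_eq_of_le (hx0A i) with h | h
    · exact h
    · exact absurd (Finset.mem_filter.mpr ⟨Finset.mem_univ i, h.symm⟩) hi
  -- Farkas: cE lies in the cone of tight rows
  have hfarkas : ∃ y : Fin m → ℝ, (∀ i, 0 ≤ y i) ∧ cE = ∑ i ∈ S, y i • rA i := by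
    refine farkas_sep rA S cE (fun d hd => ?_)
    by_contra hneg
    push_neg at hneg
    rw [real_inner_euclid] at hneg
    -- construct a feasible descent direction
    set δ : Fin m → ℝ := fun i => if i ∈ S then 1 else
      ((∑ j, (A i j : ℝ) * x0 j) - b i) / (|∑ j, (A i j : ℝ) * d j| + 1) with hδ
    have hδpos : ∀ i, 0 < δ i := by
      intro i
      by_cases hi : i ∈ S
      · simp [hδ, hi]
      · have h1 := hslack i hi
        have h2 : (0:ℝ) < |∑ j, (A i j : ℝ) * d j| + 1 := by positivity
        simp only [hδ, hi, if_false]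
        exact div_pos (by linarith) h2
    set ε : ℝ := Finset.fold min 1 δ univ with hε
    have hεle : ε ≤ 1 ∧ ∀ i ∈ (univ : Finset (Fin m)), ε ≤ δ i := by
      have h := le_refl ε
      rw [hε] at h
      exact (Finset.le_fold_min ε).mp h
    have hεpos : 0 < ε := by
      rw [hε, Finset.lt_fold_min]
      exact ⟨one_pos, fun i _ => hδpos i⟩
    set x1 : Fin n → ℝ := fun j => x0 j + ε * d j with hx1
    have hsum : ∀ i, ∑ j, (A i j : ℝ) * x1 j
        = (∑ j, (A i j : ℝ) * x0 j) + ε * ∑ j, (A i j : ℝ) * d j := by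
      intro i
      rw [Finset.mul_sum, ← Finset.sum_add_distrib]
      refine Finset.sum_congr rfl (fun j _ => ?_)
      simp [hx1]; ring
    have hx1f : ∀ i, b i ≤ ∑ j, (A i j : ℝ) * x1 j := by
      intro i
      rw [hsum i]
      by_cases hi : i ∈ S
      · have h1 : 0 ≤ ∑ j, (A i j : ℝ) * d j := by
          have := hd i hi
          rwa [real_inner_euclid] at this
        have h2 := htight i hi
        nlinarith
      · have h1 := hslack i hi
        have h2 : ε ≤ δ i := hεle.2 i (Finset.mem_univ i)
        have h3 : (0:ℝ) < |∑ j, (A i j : ℝ) * d j| + 1 := by positivity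
        have h4 : δ i * (|∑ j, (A i j : ℝ) * d j| + 1)
            = (∑ j, (A i j : ℝ) * x0 j) - b i := by
          simp only [hδ, hi, if_false]
          exact div_mul_cancel₀ _ h3.ne'
        have h5 : ε * (|∑ j, (A i j : ℝ) * d j| + 1)
            ≤ (∑ j, (A i j : ℝ) * x0 j) - b i := by
          rw [← h4]
          exact mul_le_mul_of_nonneg_right h2 h3.le
        have h6 : -(|∑ j, (A i j : ℝ) * d j|) ≤ ∑ j, (A i j : ℝ) * d j :=
          neg_abs_le _
        nlinarith [abs_nonneg (∑ j, (A i j : ℝ) * d j)]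
      -- descent contradicts optimality
    have hmem : (∑ j, ((c j : ℚ) : ℝ) * x1 j) ∈ {w : ℝ | ∃ x : Fin n → ℝ,
        (∀ k, (fun k => ∑ i, (U k i : ℝ) * b i) k ≤ ∑ j, ((U * A) k j : ℝ) * x j) ∧
          w = ∑ j, ((c j : ℚ) : ℝ) * x j} := ⟨x1, (hfeq x1).mpr hx1f, rfl⟩
    have hge := hlb hmem
    have hlt : ∑ j, ((c j : ℚ) : ℝ) * x1 j < v := by
      have hexp : ∑ j, ((c j : ℚ) : ℝ) * x1 j
          = (∑ j, ((c j : ℚ) : ℝ) * x0 j) + ε * ∑ j, d j * cE j := by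
        rw [Finset.mul_sum, ← Finset.sum_add_distrib]
        refine Finset.sum_congr rfl (fun j _ => ?_)
        simp [hx1, hcE]; ring
      have hvv : v = ∑ j, ((c j : ℚ) : ℝ) * x0 j := by
        rw [hx0v]
        refine Finset.sum_congr rfl (fun j _ => ?_)
        norm_cast
      rw [hexp, ← hvv]
      have : ε * ∑ j, d j * cE j < 0 := mul_neg_of_pos_of_neg hεpos hneg
      linarith
    have hvv : v = ∑ j, ((c j : ℚ) : ℝ) * x0 j := by
      rw [hx0v]
      refine Finset.sum_congr rfl (fun j _ => ?_)
      norm_cast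
    linarith [hge, hlt]
  -- Carathéodory: restrict to linearly independent tight subfamily
  obtain ⟨t, htS, hli, z, hz0, hcz⟩ := carat' rA S cE hfarkas
  -- transfer linear independence to ℚ
  have hliQ : LinearIndependent ℚ (fun i : ↥t => (fun j => A i j : Fin n → ℚ)) := by
    rw [Fintype.linearIndependent_iff]
    intro g hg i
    have hgR : ∑ i' : ↥t, ((g i' : ℝ)) • rA i' = (0 : EuclideanSpace ℝ (Fin n)) := by
      ext j
      have h1 : (∑ i' : ↥t, ((g i' : ℝ)) • rA i') j = ∑ i' : ↥t, (g i' : ℝ) * A i' j := by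
        rw [esum_apply]
        rfl
      have h2 : (∑ i' : ↥t, g i' • (fun j => A i' j : Fin n → ℚ)) j = 0 := by rw [hg]; rfl
      rw [Finset.sum_apply] at h2
      have h3 : ∑ i' : ↥t, (g i' : ℝ) * (A i' j : ℝ) = ((∑ i' : ↥t, g i' * A i' j : ℚ) : ℝ) := by
        push_cast; rfl
      have h4 : (∑ i' : ↥t, g i' * A i' j : ℚ) = 0 := by
        rw [← h2]; rfl
      rw [h1, h3, h4]
      simp
    have := Fintype.linearIndependent_iff.mp hli (fun i' => (g i' : ℝ)) hgR i
    exact_mod_cast this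
  have hmat := hMc t hliQ
  -- the rational dual solution
  set yq : Fin m → ℚ := fun i => if i ∈ t then ∑ j, Mc t i j * (c j : ℚ) else 0 with hyq
  have hcEapp : ∀ j, cE j = ∑ i ∈ t, z i * (A i j : ℝ) := by
    intro j
    rw [hcz, esum_apply]
    rfl
  have hcast : ∀ i ∈ t, ((yq i : ℚ) : ℝ) = z i := by
    intro i hi
    have h1 : ((yq i : ℚ) : ℝ) = ∑ j, ((Mc t i j : ℚ) : ℝ) * cE j := by
      simp only [hyq, hi, if_true]
      push_cast
      rfl
    rw [h1]
    have h2 : ∀ j, ((Mc t i j : ℚ) : ℝ) * cE j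
        = ∑ i' ∈ t, z i' * (((Mc t i j : ℚ) : ℝ) * (A i' j : ℝ)) := by
      intro j
      rw [hcEapp j, Finset.mul_sum]
      exact Finset.sum_congr rfl (fun i' _ => by ring)
    rw [Finset.sum_congr rfl (fun j _ => h2 j), Finset.sum_comm]
    have h3 : ∀ i' ∈ t, ∑ j, z i' * (((Mc t i j : ℚ) : ℝ) * (A i' j : ℝ))
        = z i' * (if i' = i then 1 else 0) := by
      intro i' hi'
      rw [← Finset.mul_sum]
      congr 1
      have := hmat i hi i' hi'
      have hcastsum : ∑ j, ((Mc t i j : ℚ) : ℝ) * ((A i' j : ℚ) : ℝ)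
          = ((∑ j, Mc t i j * A i' j : ℚ) : ℝ) := by push_cast; rfl
      rw [hcastsum, this]
      split <;> norm_num
    rw [Finset.sum_congr rfl h3,
      Finset.sum_congr rfl (fun i' _ => by
        show z i' * (if i' = i then 1 else 0) = if i' = i then z i' else 0
        split <;> simp),
      Finset.sum_ite_eq' t i z]
    simp [hi]
  have hyq0 : ∀ i, 0 ≤ yq i := by
    intro i
    by_cases hi : i ∈ t
    · have := hcast i hi
      have hz := hz0 i
      rw [← this] at hz
      exact_mod_cast hz
    · simp [hyq, hi]
  -- integrality of D * yq
  have hyint : ∀ i, ∃ zz : ℤ, (zz : ℚ) = (D:ℚ) * yq i := by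
    intro i
    by_cases hi : i ∈ t
    · have : ∀ j, ∃ zz : ℤ, (zz : ℚ) = (D:ℚ) * Mc t i j :=
        fun j => int_of_den_dvd D (Mc t i j) (hDden t i j)
      choose w hw using this
      refine ⟨∑ j, w j * c j, ?_⟩
      simp only [hyq, hi, if_true, Finset.mul_sum]
      push_cast
      refine Finset.sum_congr rfl (fun j _ => ?_)
      rw [hw j]
      ring
    · exact ⟨0, by simp [hyq, hi]⟩
  have hynum : ∀ i, ((((D:ℚ) * yq i).num : ℤ) : ℚ) = (D:ℚ) * yq i := by
    intro i
    obtain ⟨zz, hzz⟩ := hyint i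
    rw [← hzz, Rat.num_intCast]
  refine ⟨fun i => ((D:ℚ) * yq i).num, ?_, ?_, ?_⟩
  · intro i
    have h1 : (0:ℚ) ≤ (D:ℚ) * yq i := mul_nonneg (by positivity) (hyq0 i)
    rw [← hynum i] at h1
    exact_mod_cast h1
  · intro j
    have hQ : ∑ i, yq i * A i j = (c j : ℚ) := by
      have hR : ∑ i, ((yq i : ℚ) : ℝ) * (A i j : ℝ) = ((c j : ℚ) : ℝ) := by
        have h1 : ∑ i, ((yq i : ℚ) : ℝ) * (A i j : ℝ)
            = ∑ i ∈ t, ((yq i : ℚ) : ℝ) * (A i j : ℝ) :=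
          (Finset.sum_subset (Finset.subset_univ t) (fun i _ hit => by simp [hyq, hit])).symm
        rw [h1, Finset.sum_congr rfl (fun i hi => by rw [hcast i hi]), ← hcEapp j]
      exact_mod_cast hR
    have hterm : ∀ i, ((((D:ℚ) * yq i).num : ℤ) : ℚ) * (U * A) i j = yq i * A i j := by
      intro i
      rw [hynum i, hUA i j]
      calc ((D:ℚ) * yq i) * ((D:ℚ)⁻¹ * A i j) = ((D:ℚ) * (D:ℚ)⁻¹) * (yq i * A i j) := by ring
        _ = yq i * A i j := by rw [mul_inv_cancel₀ hDQ, one_mul]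
    rw [Finset.sum_congr rfl (fun i _ => hterm i), hQ]
  · have h1 : ∑ i, (((((D:ℚ) * yq i).num : ℤ)) : ℝ) * ((fun k => ∑ i', (U k i' : ℝ) * b i') i)
        = ∑ i, ((yq i : ℚ) : ℝ) * b i := by
      refine Finset.sum_congr rfl (fun i _ => ?_)
      have h2 : (((((D:ℚ) * yq i).num : ℤ)) : ℝ) = (D:ℝ) * ((yq i : ℚ) : ℝ) := by
        exact_mod_cast congrArg (fun q : ℚ => (q : ℝ)) (hynum i)
      simp only
      rw [hUb b i, h2]
      calc ((D:ℝ) * ((yq i : ℚ) : ℝ)) * ((D:ℝ)⁻¹ * b i)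
          = ((D:ℝ) * (D:ℝ)⁻¹) * (((yq i : ℚ) : ℝ) * b i) := by ring
        _ = ((yq i : ℚ) : ℝ) * b i := by rw [mul_inv_cancel₀ hDR, one_mul]
    rw [h1]
    have h3 : ∑ i, ((yq i : ℚ) : ℝ) * b i = ∑ i ∈ t, z i * b i := by
      rw [← Finset.sum_subset (Finset.subset_univ t) (fun i _ hit => by simp [hyq, hit])]
      exact Finset.sum_congr rfl (fun i hi => by rw [hcast i hi])
    rw [h3]
    have h4 : ∀ i ∈ t, z i * b i = z i * ∑ j, (A i j : ℝ) * x0 j := by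
      intro i hi
      rw [htight i (htS hi)]
    rw [Finset.sum_congr rfl h4]
    have h5 : ∑ i ∈ t, z i * ∑ j, (A i j : ℝ) * x0 j
        = ∑ j, (∑ i ∈ t, z i * (A i j : ℝ)) * x0 j := by
      simp_rw [Finset.mul_sum, Finset.sum_mul]
      rw [Finset.sum_comm]
      exact Finset.sum_congr rfl (fun j _ => Finset.sum_congr rfl (fun i _ => by ring))
    rw [h5]
    have h6 : ∀ j, (∑ i ∈ t, z i * (A i j : ℝ)) = ((c j : ℚ) : ℝ) := by
      intro j
      rw [← hcEapp j]
    rw [Finset.sum_congr rfl (fun j _ => by rw [h6 j]), hx0v]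
    exact Finset.sum_congr rfl (fun j _ => by norm_cast)
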